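/- arXiv:1103.0901 — 2 statements merged into one kernel-verified Lean document; each statement's English description precedes it below -/
import Mathlib

section
/- Let n ≥ 1, let Δ = {−n,…,n}² ⊂ ℤ², and let x, y ∈ ℤ² \ Δ. Suppose P is a *path from x to y avoiding Δ with winding number W(P) < 0 (a clockwise *path in Δᶜ) and Q is a *path from x to y avoiding Δ with winding number W(Q) > 0 (a counterclockwise *path in Δᶜ). Then there exists a *circuit around Δ all of whose sites belong to P ∪ Q. -/
open MeasureTheory ProbabilityTheory
open scoped ENNReal

namespace Percolation

/-- Sites of the square lattice. -/
abbrev Site : Type := ℤ × ℤ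

/-- Configurations: spins `0`/`1` encoded as `false`/`true`. -/
abbrev Config : Type := Site → Bool

/-- Nearest-neighbour adjacency: Euclidean distance `1`. -/
def adj (x y : Site) : Prop :=
  (x.1 - y.1) ^ 2 + (x.2 - y.2) ^ 2 = 1

/-- `*`adjacency: Euclidean distance `1` or `√2`. -/
def adjStar (x y : Site) : Prop :=
  x ≠ y ∧ |x.1 - y.1| ≤ 1 ∧ |x.2 - y.2| ≤ 1

/-- `x` and `y` are joined inside `G` by a path whose consecutive sites satisfy `R`. -/
def JoinedIn (R : Site → Site → Prop) (G : Set Site) (x y : Site) : Prop :=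
  ∃ P : List Site, P.Chain' R ∧ (∀ z ∈ P, z ∈ G) ∧ P.head? = some x ∧ P.getLast? = some y

/-- `S` is a `0`cluster of `σ`: a maximal `adj`-connected subset of `σ⁻¹(0)`. -/
def IsCluster0 (σ : Config) (S : Set Site) : Prop :=
  S.Nonempty ∧ (∀ z ∈ S, σ z = false) ∧
    (∀ x ∈ S, ∀ y ∈ S, JoinedIn adj S x y) ∧
    (∀ x ∈ S, ∀ y : Site, adj x y → σ y = false → y ∈ S)

/-- `S` is a `1*`cluster of `σ`: a maximal `adjStar`-connected subset of `σ⁻¹(1)`. -/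
def IsCluster1 (σ : Config) (S : Set Site) : Prop :=
  S.Nonempty ∧ (∀ z ∈ S, σ z = true) ∧
    (∀ x ∈ S, ∀ y ∈ S, JoinedIn adjStar S x y) ∧
    (∀ x ∈ S, ∀ y : Site, adjStar x y → σ y = true → y ∈ S)

/-- `x` belongs to an infinite `1*`cluster of `σ`. -/
def InInfinite1 (σ : Config) (x : Site) : Prop :=
  ∃ S : Set Site, IsCluster1 σ S ∧ S.Infinite ∧ x ∈ S

/-- There is exactly one infinite `0`cluster. -/
def UniqueInfinite0 (σ : Config) : Prop :=
  ∃! S : Set Site, IsCluster0 σ S ∧ S.Infinite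

/-- There is exactly one infinite `1*`cluster. -/
def UniqueInfinite1 (σ : Config) : Prop :=
  ∃! S : Set Site, IsCluster1 σ S ∧ S.Infinite

/-- There is at most one infinite `1*`cluster. -/
def AtMostOneInfinite1 (σ : Config) : Prop :=
  ∀ S T : Set Site, IsCluster1 σ S → S.Infinite → IsCluster1 σ T → T.Infinite → S = T

/-- An infinite `1*`cluster exists. -/
def ExistsInfinite1 (σ : Config) : Prop := ∃ S : Set Site, IsCluster1 σ S ∧ S.Infinite

/-- An infinite `0`cluster exists. -/
def ExistsInfinite0 (σ : Config) : Prop := ∃ S : Set Site, IsCluster0 σ S ∧ S.Infinite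

/-- An increasing event. -/
def IncreasingEvent (A : Set Config) : Prop :=
  ∀ ⦃ξ η : Config⦄, ξ ∈ A → ξ ≤ η → η ∈ A

/-- Positive association: increasing events are positively correlated. -/
def PositivelyAssociated (μ : Measure Config) : Prop :=
  ∀ A B : Set Config, MeasurableSet A → MeasurableSet B →
    IncreasingEvent A → IncreasingEvent B → μ A * μ B ≤ μ (A ∩ B)

/-- The cylinder event "`η` on `Δ`". -/
def cylEvent (Δ : Finset Site) (η : Site → Bool) : Set Config :=
  {σ | ∀ z ∈ Δ, σ z = η z}

/-- The σ-algebra generated by the spins outside `Δ`. -/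
def outsideAlgebra (Δ : Finset Site) : MeasurableSpace Config :=
  MeasurableSpace.comap (fun σ (z : {z : Site // z ∉ Δ}) => σ z.1) inferInstance

/-- The bounded energy condition: `μ(η on Δ | ξ off Δ) ≥ c_{|Δ|}` for a.e. `ξ`, expressed
via integrated conditional probabilities against events of the outside σ-algebra. -/
def BoundedEnergy (μ : Measure Config) : Prop :=
  ∀ n : ℕ, ∃ c : ℝ≥0∞, 0 < c ∧
    ∀ Δ : Finset Site, Δ.card = n → ∀ η : Site → Bool,
      ∀ B : Set Config, MeasurableSet[outsideAlgebra Δ] B →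
        c * μ B ≤ μ (cylEvent Δ η ∩ B)

/-- The finite energy condition: `μ(η on Δ | ξ off Δ) > 0` for a.e. `ξ`, expressed
via integrated conditional probabilities against events of the outside σ-algebra. -/
def FiniteEnergy (μ : Measure Config) : Prop :=
  ∀ (Δ : Finset Site) (η : Site → Bool) (B : Set Config),
    MeasurableSet[outsideAlgebra Δ] B → 0 < μ B → 0 < μ (cylEvent Δ η ∩ B)

/-- The tail σ-algebra. -/
def tailAlgebra : MeasurableSpace Config :=
  ⨅ Δ : Finset Site, outsideAlgebra Δ

/-- Translation of configurations by `v`. -/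
def shift (v : Site) (σ : Config) : Config := fun z => σ (z + v)

/-- A site viewed as a complex number. -/
noncomputable def toC (z : Site) : ℂ := (z.1 : ℂ) + (z.2 : ℂ) * Complex.I

/-- Winding number around the origin of the polygonal curve through the sites of `P`. -/
noncomputable def winding (P : List Site) : ℝ :=
  (1 / (2 * Real.pi)) *
    ((P.zip P.tail).map fun p => Complex.arg (toC p.2 / toC p.1)).sum

/-- Winding number of `P` around the site `w`. -/
noncomputable def windingAround (P : List Site) (w : Site) : ℝ :=
  winding (P.map fun z => z - w)

/-- The site `w` lies in the interior of the circuit `C`, i.e. is enclosed by `C`. -/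
def circuitEncloses (C : List Site) (w : Site) : Prop :=
  w ∉ C ∧ windingAround (C ++ C.take 1) w ≠ 0

/-- A circuit: a path whose starting site is adjacent to its ending site. -/
def IsCircuit (C : List Site) : Prop :=
  C.Chain' adj ∧ ∃ h : C ≠ [], adj (C.getLast h) (C.head h)

/-- A `*`circuit: a `*`path whose starting site is `*`adjacent to its ending site. -/
def IsStarCircuit (C : List Site) : Prop :=
  C.Chain' adjStar ∧ ∃ h : C ≠ [], adjStar (C.getLast h) (C.head h)

/-- A (finite) `1*`path with respect to `σ`. -/
def Is1StarPath (σ : Config) (P : List Site) : Prop :=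
  P ≠ [] ∧ P.Chain' adjStar ∧ ∀ z ∈ P, σ z = true

/-- A (finite) `0`path with respect to `σ`. -/
def Is0Path (σ : Config) (P : List Site) : Prop :=
  P ≠ [] ∧ P.Chain' adj ∧ ∀ z ∈ P, σ z = false

/-- A `1*`circuit with respect to `σ`. -/
def Is1StarCircuit (σ : Config) (C : List Site) : Prop :=
  IsStarCircuit C ∧ ∀ z ∈ C, σ z = true

/-- A `0`circuit with respect to `σ`. -/
def Is0Circuit (σ : Config) (C : List Site) : Prop :=
  IsCircuit C ∧ ∀ z ∈ C, σ z = false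

/-- `C` is a circuit around `Δ`: every site of `Δ` is enclosed by `C`. -/
def CircuitAround (C : List Site) (Δ : Set Site) : Prop :=
  ∀ z ∈ Δ, circuitEncloses C z

/-- A mixed circuit with respect to `σ`: a self-avoiding `*`circuit consisting of a
self-avoiding `1*`path followed by a self-avoiding `0`path (either part may be empty). -/
def IsMixedCircuit (σ : Config) (C : List Site) : Prop :=
  ∃ P Q : List Site, C = P ++ Q ∧ C.Nodup ∧
    P.Chain' adjStar ∧ Q.Chain' adj ∧
    (∀ z ∈ P, σ z = true) ∧ (∀ z ∈ Q, σ z = false) ∧ IsStarCircuit C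

/-- `z` lies in the exterior of the circuit `C`. -/
def InExterior (C : List Site) (z : Site) : Prop :=
  z ∉ C ∧ ¬ circuitEncloses C z

/-- An infinite self-avoiding `1*`path with respect to `σ`. -/
def IsInfSA1StarPath (σ : Config) (f : ℕ → Site) : Prop :=
  Function.Injective f ∧ (∀ i, adjStar (f i) (f (i + 1))) ∧ ∀ i, σ (f i) = true

/-- An infinite self-avoiding `0`path with respect to `σ`. -/
def IsInfSA0Path (σ : Config) (f : ℕ → Site) : Prop :=
  Function.Injective f ∧ (∀ i, adj (f i) (f (i + 1))) ∧ ∀ i, σ (f i) = false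

/-- There exist `n` pairwise disjoint infinite self-avoiding `1*`paths. -/
def HasNDisjoint1 (σ : Config) (n : ℕ) : Prop :=
  ∃ f : Fin n → ℕ → Site, (∀ i, IsInfSA1StarPath σ (f i)) ∧
    ∀ i j, i ≠ j → Disjoint (Set.range (f i)) (Set.range (f j))

/-- A two-sided infinite self-avoiding `1*`path with respect to `σ`. -/
def IsTwoSidedInf1 (σ : Config) (f : ℤ → Site) : Prop :=
  Function.Injective f ∧ (∀ i : ℤ, adjStar (f i) (f (i + 1))) ∧ ∀ i : ℤ, σ (f i) = true

/-- A `1*`path of `σ` from `x` to `y` avoiding `Δ`. -/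
def starPathBetweenAvoiding (σ : Config) (Δ : Set Site) (x y : Site) (P : List Site) : Prop :=
  Is1StarPath σ P ∧ P.head? = some x ∧ P.getLast? = some y ∧ ∀ z ∈ P, z ∉ Δ

/-- `x` is on the left side of `Γ`. -/
def OnLeftSide (x : Site) (Γ : Set Site) : Prop :=
  ∃ d : ℕ, 0 < d ∧ (∀ z ∈ Γ, |z.1| ≤ (d : ℤ) ∧ |z.2| ≤ (d : ℤ)) ∧ x.1 ≤ -(d : ℤ)

/-- `x` is on the right side of `Γ`. -/
def OnRightSide (x : Site) (Γ : Set Site) : Prop :=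
  ∃ d : ℕ, 0 < d ∧ (∀ z ∈ Γ, |z.1| ≤ (d : ℤ) ∧ |z.2| ≤ (d : ℤ)) ∧ (d : ℤ) ≤ x.1

/-- The square `{-n, …, n}²`. -/
def square (n : ℕ) : Set Site := {z : Site | |z.1| ≤ (n : ℤ) ∧ |z.2| ≤ (n : ℤ)}

/-- The `*`boundary `∂*B` of a set of sites. -/
def starBoundary (B : Set Site) : Set Site :=
  {x | x ∉ B ∧ ∃ y ∈ B, adjStar x y}

/-- The union of all infinite `1*`clusters of `σ`. -/
def InfinitePart1 (σ : Config) : Set Site := {z | InInfinite1 σ z}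

/-- The filled infinite `1*`cluster `S₁*`: the infinite `1*`cluster together with all
finite `0`clusters `*`encircled by it. -/
def Fill (σ : Config) : Set Site :=
  InfinitePart1 σ ∪
    {z | ∃ F : Set Site, IsCluster0 σ F ∧ F.Finite ∧ z ∈ F ∧
      ∃ C : List Site, IsStarCircuit C ∧ (∀ w ∈ C, w ∈ InfinitePart1 σ) ∧
        ∀ w ∈ F, circuitEncloses C w}

/-- The indicator of the filled infinite `1*`cluster, as a point of `{0,1}^{ℤ²}`. -/
noncomputable def fillInd (σ : Config) : Site → Bool :=
  fun z => @decide (z ∈ Fill σ) (Classical.propDecidable _)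

/-- Exactly one infinite `0`cluster and exactly one infinite `1*`cluster coexist. -/
def CoexistUnique (σ : Config) : Prop := UniqueInfinite0 σ ∧ UniqueInfinite1 σ


/-! ### Auxiliary machinery for statement6 -/

section Statement6Aux

open Complex

/-- Consecutive pairs of a list. -/
def prs {α : Type*} (L : List α) : List (α × α) := L.zip L.tail

/-- The argument increment along one step, viewed from `w`. -/
noncomputable def pairArg (w : ℂ) (p : Site × Site) : ℝ :=
  Complex.arg ((toC p.2 - w) / (toC p.1 - w))

/-- Total argument increment along a path, viewed from `w`. -/
noncomputable def Ssum (L : List Site) (w : ℂ) : ℝ := ((prs L).map (pairArg w)).sum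

lemma toC_re (z : Site) : (toC z).re = z.1 := by simp [toC]
lemma toC_im (z : Site) : (toC z).im = z.2 := by simp [toC]

lemma toC_sub (a w : Site) : toC (a - w) = toC a - toC w := by
  simp only [toC, Prod.fst_sub, Prod.snd_sub]
  push_cast
  ring

lemma toC_ne {n : ℕ} {b : Site} (hb : b ∉ square n) {w : ℂ}
    (hw1 : |w.re| ≤ (n : ℝ)) (hw2 : |w.im| ≤ (n : ℝ)) : toC b ≠ w := by
  intro h
  apply hb
  have h1 : (b.1 : ℝ) = w.re := by rw [← h, toC_re]
  have h2 : (b.2 : ℝ) = w.im := by rw [← h, toC_im]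
  constructor
  · have : |(b.1 : ℝ)| ≤ (n : ℝ) := by rw [h1]; exact hw1
    exact_mod_cast this
  · have : |(b.2 : ℝ)| ≤ (n : ℝ) := by rw [h2]; exact hw2
    exact_mod_cast this

lemma mem_of_prs {L : List Site} {p : Site × Site} (hp : p ∈ prs L) :
    p.1 ∈ L ∧ p.2 ∈ L := by
  have := List.of_mem_zip (l₁ := L) (l₂ := L.tail) (a := p.1) (b := p.2) hp
  exact ⟨this.1, List.mem_of_mem_tail this.2⟩

lemma chain'_prs {R : Site → Site → Prop} :
    ∀ {L : List Site}, L.Chain' R → ∀ p ∈ prs L, R p.1 p.2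
  | [], _, p, hp => by simp [prs] at hp
  | [a], _, p, hp => by simp [prs] at hp
  | a :: b :: L, h, p, hp => by
    replace h := List.isChain_cons_cons.1 h
    rcases (by simpa [prs] using hp : p = (a, b) ∨ p ∈ prs (b :: L)) with h' | h'
    · subst h'; exact h.1
    · exact chain'_prs h.2 p h'


lemma prs_cons₂ {α : Type*} (a b : α) (L : List α) :
    prs (a :: b :: L) = (a, b) :: prs (b :: L) := rfl

lemma prs_append {α : Type*} :
    ∀ (A : List α) (hA : A ≠ []) (b : α) (B : List α),
      prs (A ++ b :: B) = prs A ++ (A.getLast hA, b) :: prs (b :: B)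
  | [a], _, b, B => rfl
  | a :: c :: A', _, b, B => by
    have ih := prs_append (c :: A') (by simp) b B
    show prs (a :: c :: (A' ++ b :: B)) = _
    rw [prs_cons₂, show (c :: (A' ++ b :: B)) = (c :: A') ++ b :: B from rfl, ih]
    simp [prs_cons₂, List.getLast_cons_cons]

lemma prs_reverse {α : Type*} :
    ∀ (L : List α), prs L.reverse = ((prs L).reverse).map Prod.swap
  | [] => rfl
  | [a] => rfl
  | a :: c :: M => by
    have ih := prs_reverse (c :: M)
    have hne : (c :: M).reverse ≠ [] := by simp
    have h1 : (a :: c :: M).reverse = (c :: M).reverse ++ a :: [] := by simp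
    rw [h1, prs_append _ hne a List.nil, ih]
    have h2 : (c :: M).reverse.getLast hne = c := by
      rw [List.getLast_reverse]; rfl
    rw [h2]
    simp [prs_cons₂, prs]

lemma Ssum_nil (w : ℂ) : Ssum [] w = 0 := rfl

lemma Ssum_single (a : Site) (w : ℂ) : Ssum [a] w = 0 := rfl

lemma Ssum_cons₂ (a b : Site) (L : List Site) (w : ℂ) :
    Ssum (a :: b :: L) w = pairArg w (a, b) + Ssum (b :: L) w := rfl

lemma Ssum_append (A : List Site) (hA : A ≠ []) (B : List Site) (hB : B ≠ []) (w : ℂ) :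
    Ssum (A ++ B) w = Ssum A w + pairArg w (A.getLast hA, B.head hB) + Ssum B w := by
  obtain ⟨b, B', rfl⟩ := List.exists_cons_of_ne_nil hB
  unfold Ssum
  rw [prs_append A hA b B']
  simp only [List.map_append, List.sum_append, List.map_cons, List.sum_cons, List.head_cons]
  ring

lemma Ssum_reverse (L : List Site) (w : ℂ)
    (h : ∀ p ∈ prs L, pairArg w (p.2, p.1) = - pairArg w p) :
    Ssum L.reverse w = - Ssum L w := by
  unfold Ssum
  rw [prs_reverse, List.map_map, List.map_reverse, List.sum_reverse]
  have : ∀ p ∈ prs L, (pairArg w ∘ Prod.swap) p = (fun q => - pairArg w q) p := by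
    intro p hp
    obtain ⟨p1, p2⟩ := p
    simpa [Function.comp, Prod.swap] using h _ hp
  rw [List.map_congr_left this]
  induction prs L with
  | nil => simp
  | cons p l ih => simp only [List.map_cons, List.sum_cons, ih]; ring

lemma prod_ratio :
    ∀ (L : List Site) (hL : L ≠ []) (w : ℂ), (∀ z ∈ L, toC z - w ≠ 0) →
      ((prs L).map (fun p => (toC p.2 - w) / (toC p.1 - w))).prod
        = (toC (L.getLast hL) - w) / (toC (L.head hL) - w)
  | [a], _, w, h => by
    simp [prs, div_self (h a (by simp))]
  | a :: b :: L, _, w, h => by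
    have ih := prod_ratio (b :: L) (by simp) w (fun z hz => h z (List.mem_cons_of_mem a hz))
    have hb : toC b - w ≠ 0 := h b (by simp)
    rw [prs_cons₂]
    simp only [List.map_cons, List.prod_cons, List.head_cons, List.getLast_cons_cons] at ih ⊢
    rw [ih, div_mul_div_comm, mul_comm (toC a - w) (toC b - w), mul_div_mul_left _ _ hb]

lemma coe_sum_arg :
    ∀ (l : List ℂ), (∀ z ∈ l, z ≠ 0) →
      (((l.map Complex.arg).sum : ℝ) : Real.Angle) = ((l.prod).arg : Real.Angle)
  | [], _ => by simp
  | a :: l, h => by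
    have ih := coe_sum_arg l (fun z hz => h z (List.mem_cons_of_mem a hz))
    have ha : a ≠ 0 := h a (by simp)
    have hl : l.prod ≠ 0 := List.prod_ne_zero (fun h0 => (h 0 (List.mem_cons_of_mem a h0)) rfl)
    simp only [List.map_cons, List.sum_cons, List.prod_cons]
    rw [Real.Angle.coe_add, ih, Complex.arg_mul_coe_angle ha hl]

lemma Ssum_int (L : List Site) (hL : L ≠ []) (hloop : L.getLast hL = L.head hL) (w : ℂ)
    (h : ∀ z ∈ L, toC z - w ≠ 0) : ∃ k : ℤ, Ssum L w = k * (2 * Real.pi) := by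
  have hz : ∀ z ∈ (prs L).map (fun p => (toC p.2 - w) / (toC p.1 - w)), z ≠ 0 := by
    intro z hz
    obtain ⟨p, hp, rfl⟩ := List.mem_map.1 hz
    obtain ⟨h1, h2⟩ := mem_of_prs hp
    exact div_ne_zero (h _ h2) (h _ h1)
  have h1 : ((Ssum L w : ℝ) : Real.Angle) = ((0 : ℝ) : Real.Angle) := by
    unfold Ssum
    have hmm : (prs L).map (pairArg w)
        = ((prs L).map (fun p => (toC p.2 - w) / (toC p.1 - w))).map Complex.arg := by
      rw [List.map_map]; rfl
    rw [hmm, coe_sum_arg _ hz, prod_ratio L hL w h, hloop,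
      div_self (h _ (List.head_mem hL)), Complex.arg_one]
  rw [Real.Angle.angle_eq_iff_two_pi_dvd_sub] at h1
  obtain ⟨k, hk⟩ := h1
  exact ⟨k, by rw [sub_zero] at hk; rw [hk]; ring⟩


lemma key_t_eq_one {N A B wc t : ℝ} (hA : N + 1 ≤ A) (hAB : |A - B| ≤ 1)
    (heq : (1 - t) * A + t * B = wc) (hw : |wc| ≤ N) (ht0 : 0 ≤ t) (ht1 : t ≤ 1) :
    t = 1 := by
  have h1 := abs_le.1 hAB
  have h2 := abs_le.1 hw
  have hB : A - 1 ≤ B := by linarith [h1.2]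
  have e1 : (0:ℝ) ≤ (1 - t) * (A - (N + 1)) := mul_nonneg (by linarith) (by linarith)
  have e2 : (0:ℝ) ≤ t * (B - N) := mul_nonneg ht0 (by linarith)
  nlinarith [e1, e2]

lemma key2_t_eq_one {N A B wc t : ℝ} (hA : N + 1 ≤ |A|) (hAB : |A - B| ≤ 1)
    (heq : (1 - t) * A + t * B = wc) (hw : |wc| ≤ N) (ht0 : 0 ≤ t) (ht1 : t ≤ 1) :
    t = 1 := by
  rcases le_or_gt 0 A with h | h
  · exact key_t_eq_one (by rwa [_root_.abs_of_nonneg h] at hA) hAB heq hw ht0 ht1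
  · refine key_t_eq_one (N := N) (A := -A) (B := -B) (wc := -wc)
      (by rwa [_root_.abs_of_neg h] at hA) ?_ (by linarith) (by rwa [abs_neg]) ht0 ht1
    rw [show -A - -B = -(A - B) by ring, abs_neg]
    exact hAB

lemma seg_avoid (n : ℕ) {a b : Site} (ha : a ∉ square n) (hb : b ∉ square n)
    (h1 : |a.1 - b.1| ≤ 1) (h2 : |a.2 - b.2| ≤ 1) {w : ℂ}
    (hw1 : |w.re| ≤ (n : ℝ)) (hw2 : |w.im| ≤ (n : ℝ)) {t : ℝ} (ht0 : 0 ≤ t) (ht1 : t ≤ 1) :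
    ((1 - t : ℝ) : ℂ) * toC a + (t : ℂ) * toC b ≠ w := by
  intro heq
  have hre : (1 - t) * (a.1 : ℝ) + t * (b.1 : ℝ) = w.re := by
    have := congrArg Complex.re heq
    simpa [toC, Complex.add_re, Complex.mul_re] using this
  have him : (1 - t) * (a.2 : ℝ) + t * (b.2 : ℝ) = w.im := by
    have := congrArg Complex.im heq
    simpa [toC, Complex.add_im, Complex.mul_im] using this
  have h1' : |(a.1 : ℝ) - (b.1 : ℝ)| ≤ 1 := by exact_mod_cast h1
  have h2' : |(a.2 : ℝ) - (b.2 : ℝ)| ≤ 1 := by exact_mod_cast h2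
  have ha' : (n : ℝ) + 1 ≤ |(a.1 : ℝ)| ∨ (n : ℝ) + 1 ≤ |(a.2 : ℝ)| := by
    have hna := ha
    simp only [square, Set.mem_setOf_eq, not_and_or, not_le] at hna
    rcases hna with h | h
    · left
      have : (n : ℤ) + 1 ≤ |a.1| := Int.add_one_le_iff.2 h
      exact_mod_cast this
    · right
      have : (n : ℤ) + 1 ≤ |a.2| := Int.add_one_le_iff.2 h
      exact_mod_cast this
  have ht : t = 1 := by
    rcases ha' with h | h
    · exact key2_t_eq_one h h1' hre hw1 ht0 ht1
    · exact key2_t_eq_one h h2' him hw2 ht0 ht1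
  subst ht
  have hbw : toC b = w := by
    have : ((1 - 1 : ℝ) : ℂ) * toC a + ((1 : ℝ) : ℂ) * toC b = w := heq
    simpa using this
  exact toC_ne hb hw1 hw2 hbw


lemma ratio_slit (n : ℕ) {a b : Site} (ha : a ∉ square n) (hb : b ∉ square n)
    (hadj : adjStar a b) {w : ℂ} (hw1 : |w.re| ≤ (n : ℝ)) (hw2 : |w.im| ≤ (n : ℝ)) :
    (toC b - w) / (toC a - w) ∈ Complex.slitPlane := by
  have hA : toC a - w ≠ 0 := sub_ne_zero.2 (toC_ne ha hw1 hw2)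
  have hB : toC b - w ≠ 0 := sub_ne_zero.2 (toC_ne hb hw1 hw2)
  by_contra hs
  rw [Complex.mem_slitPlane_iff] at hs
  push_neg at hs
  obtain ⟨hre, him⟩ := hs
  set q : ℂ := (toC b - w) / (toC a - w) with hq
  set r : ℝ := q.re with hr
  have hqr : q = ((r : ℝ) : ℂ) := Complex.ext rfl (by simpa using him)
  have hb_eq : toC b - w = ((r : ℝ) : ℂ) * (toC a - w) := by
    rw [← hqr, hq, div_mul_cancel₀ _ hA]
  have h1r : (0 : ℝ) < 1 - r := by linarith
  set t : ℝ := (1 - r)⁻¹ with htdef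
  have ht0 : 0 ≤ t := le_of_lt (inv_pos.2 h1r)
  have ht1 : t ≤ 1 := by
    rw [htdef]
    rw [inv_le_one_iff₀]
    right; linarith
  have htr : t * (1 - r) = 1 := inv_mul_cancel₀ h1r.ne'
  apply seg_avoid n ha hb hadj.2.1 hadj.2.2 hw1 hw2 ht0 ht1
  have htrC : ((t : ℝ) : ℂ) * (1 - ((r : ℝ) : ℂ)) = 1 := by
    have := congrArg (fun s : ℝ => (s : ℂ)) htr
    push_cast at this
    simpa using this
  push_cast
  linear_combination (t : ℂ) * hb_eq - (toC a - w) * htrC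

lemma pairArg_swap (n : ℕ) {a b : Site} (ha : a ∉ square n) (hb : b ∉ square n)
    (hadj : adjStar a b) {w : ℂ} (hw1 : |w.re| ≤ (n : ℝ)) (hw2 : |w.im| ≤ (n : ℝ)) :
    pairArg w (b, a) = - pairArg w (a, b) := by
  have hA : toC a - w ≠ 0 := sub_ne_zero.2 (toC_ne ha hw1 hw2)
  have hB : toC b - w ≠ 0 := sub_ne_zero.2 (toC_ne hb hw1 hw2)
  have hslit := ratio_slit n ha hb hadj hw1 hw2
  have hpi : Complex.arg ((toC b - w) / (toC a - w)) ≠ Real.pi := by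
    intro hc
    rw [Complex.arg_eq_pi_iff] at hc
    rw [Complex.mem_slitPlane_iff] at hslit
    rcases hslit with h | h
    · linarith [hc.1]
    · exact h hc.2
  have hinv : (toC a - w) / (toC b - w) = ((toC b - w) / (toC a - w))⁻¹ := by
    rw [inv_div]
  unfold pairArg
  simp only
  rw [hinv, Complex.arg_inv, if_neg hpi]


lemma multiples_eq {s : Set ℝ} (hs : IsPreconnected s)
    (hd : ∀ x ∈ s, ∃ k : ℤ, x = k * (2 * Real.pi)) {u v : ℝ}
    (hu : u ∈ s) (hv : v ∈ s) : u = v := by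
  have hπ := Real.pi_pos
  obtain ⟨ku, hku⟩ := hd u hu
  obtain ⟨kv, hkv⟩ := hd v hv
  have main : ∀ (p q : ℤ), p < q → ((p : ℝ) * (2 * Real.pi)) ∈ s →
      ((q : ℝ) * (2 * Real.pi)) ∈ s → False := by
    intro p q hpq hp hq
    have hcast : (p : ℝ) + 1 ≤ (q : ℝ) := by exact_mod_cast hpq
    have hmem : (p : ℝ) * (2 * Real.pi) + Real.pi ∈
        Set.Icc ((p : ℝ) * (2 * Real.pi)) ((q : ℝ) * (2 * Real.pi)) := by
      constructor
      · linarith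
      · nlinarith
    obtain ⟨j, hj⟩ := hd _ (hs.Icc_subset hp hq hmem)
    have h2 : ((2 * p + 1 : ℤ) : ℝ) * Real.pi = ((2 * j : ℤ) : ℝ) * Real.pi := by
      push_cast
      linarith [hj]
    have h3 : (2 * p + 1 : ℤ) = 2 * j := by
      exact_mod_cast mul_right_cancel₀ Real.pi_ne_zero h2
    omega
  rcases lt_trichotomy ku kv with h | h | h
  · exact absurd (main ku kv h (hku ▸ hu) (hkv ▸ hv)) (by simp)
  · rw [hku, hkv, h]
  · exact absurd (main kv ku h (hkv ▸ hv) (hku ▸ hu)) (by simp)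

lemma contOn_aux (n : ℕ) (w0 : Site) (hw0 : w0 ∈ square n) :
    ∀ (l : List (Site × Site)),
      (∀ p ∈ l, adjStar p.1 p.2 ∧ p.1 ∉ square n ∧ p.2 ∉ square n) →
      ContinuousOn (fun t : ℝ => (l.map (pairArg ((t : ℂ) * toC w0))).sum)
        (Set.Icc (0 : ℝ) 1) := by
  have hmem : ∀ t ∈ Set.Icc (0 : ℝ) 1,
      |((t : ℂ) * toC w0).re| ≤ (n : ℝ) ∧ |((t : ℂ) * toC w0).im| ≤ (n : ℝ) := by
    intro t ht
    obtain ⟨hw1, hw2⟩ := hw0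
    have hw1' : |(w0.1 : ℝ)| ≤ (n : ℝ) := by exact_mod_cast hw1
    have hw2' : |(w0.2 : ℝ)| ≤ (n : ℝ) := by exact_mod_cast hw2
    have hre : ((t : ℂ) * toC w0).re = t * (w0.1 : ℝ) := by
      simp [Complex.mul_re, toC]
    have him : ((t : ℂ) * toC w0).im = t * (w0.2 : ℝ) := by
      simp [Complex.mul_im, toC]
    constructor
    · rw [hre, abs_mul, _root_.abs_of_nonneg ht.1]
      calc t * |(w0.1 : ℝ)| ≤ 1 * |(w0.1 : ℝ)| :=
            mul_le_mul_of_nonneg_right ht.2 (abs_nonneg _)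
        _ ≤ (n : ℝ) := by rw [one_mul]; exact hw1'
    · rw [him, abs_mul, _root_.abs_of_nonneg ht.1]
      calc t * |(w0.2 : ℝ)| ≤ 1 * |(w0.2 : ℝ)| :=
            mul_le_mul_of_nonneg_right ht.2 (abs_nonneg _)
        _ ≤ (n : ℝ) := by rw [one_mul]; exact hw2'
  intro l hl
  induction l with
  | nil => simpa using continuousOn_const
  | cons p l ih =>
    simp only [List.map_cons, List.sum_cons]
    obtain ⟨hadj, hp1, hp2⟩ := hl p (by simp)
    refine ContinuousOn.add ?_ (ih (fun q hq => hl q (List.mem_cons_of_mem p hq)))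
    -- single term continuity
    have hwf : Continuous (fun t : ℝ => (t : ℂ) * toC w0) :=
      Complex.continuous_ofReal.mul continuous_const
    have hnum : ContinuousOn (fun t : ℝ => toC p.2 - (t : ℂ) * toC w0) (Set.Icc (0:ℝ) 1) :=
      (continuous_const.sub hwf).continuousOn
    have hden : ContinuousOn (fun t : ℝ => toC p.1 - (t : ℂ) * toC w0) (Set.Icc (0:ℝ) 1) :=
      (continuous_const.sub hwf).continuousOn
    have hratio : ContinuousOn
        (fun t : ℝ => (toC p.2 - (t : ℂ) * toC w0) / (toC p.1 - (t : ℂ) * toC w0))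
        (Set.Icc (0:ℝ) 1) := by
      refine hnum.div hden ?_
      intro t ht
      exact sub_ne_zero.2 (toC_ne hp1 (hmem t ht).1 (hmem t ht).2)
    intro t ht
    refine (Complex.continuousAt_arg ?_).comp_continuousWithinAt (hratio t ht)
    exact ratio_slit n hp1 hp2 hadj (hmem t ht).1 (hmem t ht).2

lemma Ssum_const (n : ℕ) (L : List Site) (hL : L ≠ [])
    (hloop : L.getLast hL = L.head hL)
    (hav : ∀ z ∈ L, z ∉ square n) (hch : L.Chain' adjStar)
    (w0 : Site) (hw0 : w0 ∈ square n) :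
    Ssum L (toC w0) = Ssum L 0 := by
  have hpairs : ∀ p ∈ prs L, adjStar p.1 p.2 ∧ p.1 ∉ square n ∧ p.2 ∉ square n := by
    intro p hp
    obtain ⟨h1, h2⟩ := mem_of_prs hp
    exact ⟨chain'_prs hch p hp, hav _ h1, hav _ h2⟩
  have hcont := contOn_aux n w0 hw0 (prs L) hpairs
  have hmem : ∀ t ∈ Set.Icc (0 : ℝ) 1,
      |((t : ℂ) * toC w0).re| ≤ (n : ℝ) ∧ |((t : ℂ) * toC w0).im| ≤ (n : ℝ) := by
    intro t ht
    obtain ⟨hw1, hw2⟩ := hw0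
    have hw1' : |(w0.1 : ℝ)| ≤ (n : ℝ) := by exact_mod_cast hw1
    have hw2' : |(w0.2 : ℝ)| ≤ (n : ℝ) := by exact_mod_cast hw2
    have hre : ((t : ℂ) * toC w0).re = t * (w0.1 : ℝ) := by simp [Complex.mul_re, toC]
    have him : ((t : ℂ) * toC w0).im = t * (w0.2 : ℝ) := by simp [Complex.mul_im, toC]
    constructor
    · rw [hre, abs_mul, _root_.abs_of_nonneg ht.1]
      nlinarith [abs_nonneg (w0.1 : ℝ), ht.2]
    · rw [him, abs_mul, _root_.abs_of_nonneg ht.1]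
      nlinarith [abs_nonneg (w0.2 : ℝ), ht.2]
  set f : ℝ → ℝ := fun t => ((prs L).map (pairArg ((t : ℂ) * toC w0))).sum with hf
  have himg := (isPreconnected_Icc (a := (0:ℝ)) (b := 1)).image f hcont
  have hval : ∀ x ∈ f '' Set.Icc (0:ℝ) 1, ∃ k : ℤ, x = k * (2 * Real.pi) := by
    rintro x ⟨t, ht, rfl⟩
    exact Ssum_int L hL hloop ((t : ℂ) * toC w0)
      (fun z hz => sub_ne_zero.2 (toC_ne (hav z hz) (hmem t ht).1 (hmem t ht).2))
  have h1mem : f 1 ∈ f '' Set.Icc (0:ℝ) 1 :=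
    Set.mem_image_of_mem f (Set.mem_Icc.2 ⟨zero_le_one, le_refl (1:ℝ)⟩)
  have h0mem : f 0 ∈ f '' Set.Icc (0:ℝ) 1 :=
    Set.mem_image_of_mem f (Set.mem_Icc.2 ⟨le_refl (0:ℝ), zero_le_one⟩)
  have heq := multiples_eq himg hval h1mem h0mem
  have e1 : f 1 = Ssum L (toC w0) := by simp [hf, Ssum]
  have e0 : f 0 = Ssum L 0 := by simp [hf, Ssum]
  rw [← e1, ← e0, heq]


lemma adjStar_symm {a b : Site} (h : adjStar a b) : adjStar b a :=
  ⟨h.1.symm, by rw [abs_sub_comm]; exact h.2.1, by rw [abs_sub_comm]; exact h.2.2⟩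

lemma winding_eq_Ssum (L : List Site) : winding L = (1 / (2 * Real.pi)) * Ssum L 0 := by
  unfold winding Ssum prs pairArg
  simp only [sub_zero]

lemma windingAround_eq_Ssum (L : List Site) (w : Site) :
    windingAround L w = (1 / (2 * Real.pi)) * Ssum L (toC w) := by
  unfold windingAround winding Ssum prs pairArg
  congr 1
  have h1 : (L.map fun z => z - w).tail = L.tail.map fun z => z - w :=
    List.map_tail.symm
  rw [h1, List.zip_map, List.map_map]
  refine congrArg List.sum (List.map_congr_left ?_)
  rintro ⟨p1, p2⟩ _
  simp [Function.comp, Prod.map, toC_sub]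

end Statement6Aux

/-- Lemma 3: a clockwise and a counterclockwise `*`path from `x` to `y` in `Δᶜ` together
contain a `*`circuit around `Δ = {-n,…,n}²`. -/
theorem statement6 (n : ℕ) (hn : 1 ≤ n) (x y : Site)
    (hx : x ∉ square n) (hy : y ∉ square n)
    (P : List Site) (hPc : P.Chain' adjStar) (hPh : P.head? = some x)
    (hPl : P.getLast? = some y) (hPavoid : ∀ z ∈ P, z ∉ square n)
    (hPw : winding P < 0)
    (Q : List Site) (hQc : Q.Chain' adjStar) (hQh : Q.head? = some x)
    (hQl : Q.getLast? = some y) (hQavoid : ∀ z ∈ Q, z ∉ square n)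
    (hQw : 0 < winding Q) :
    ∃ C : List Site, IsStarCircuit C ∧ CircuitAround C (square n) ∧
      ∀ z ∈ C, z ∈ P ∨ z ∈ Q := by
  classical
  have hπ := Real.pi_pos
  have hpos : (0 : ℝ) < 1 / (2 * Real.pi) := by positivity
  -- P and Q start with x
  obtain ⟨P', rfl⟩ : ∃ P', P = x :: P' := by
    rcases P with _ | ⟨a, P'⟩
    · simp at hPh
    · obtain rfl : a = x := by simpa using hPh
      exact ⟨P', rfl⟩
  obtain ⟨Q', rfl⟩ : ∃ Q', Q = x :: Q' := by
    rcases Q with _ | ⟨a, Q'⟩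
    · simp at hQh
    · obtain rfl : a = x := by simpa using hQh
      exact ⟨Q', rfl⟩
  have hPne : (x :: P') ≠ [] := by simp
  have hQne : (x :: Q') ≠ [] := by simp
  -- the reverse of Q starts with y
  have hQrev_ne : (x :: Q').reverse ≠ [] := by simp
  obtain ⟨b, T, hQrev⟩ := List.exists_cons_of_ne_nil hQrev_ne
  obtain rfl : y = b := by
    have h := List.head?_reverse (l := x :: Q')
    rw [hQrev, hQl] at h
    simpa using h.symm
  have hQrevchain : List.Chain' adjStar (x :: Q').reverse :=
    List.isChain_reverse.2 (List.IsChain.imp (fun a b h => adjStar_symm h) hQc)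
  -- T is nonempty (otherwise winding Q = 0)
  rcases T with _ | ⟨c, T'⟩
  · exfalso
    have hQx : (x :: Q') = [y] := by
      have h := congrArg List.reverse hQrev
      simpa using h
    rw [hQx] at hQw
    have hw0 : winding [y] = 0 := by simp [winding]
    rw [hw0] at hQw
    exact lt_irrefl 0 hQw
  have hTne : (c :: T') ≠ [] := by simp
  have hTchain : List.Chain' adjStar (c :: T') := by
    have h := hQrevchain
    rw [hQrev] at h
    exact h.tail
  have hyc : adjStar y c := by
    have h := hQrevchain
    rw [hQrev] at h
    exact (List.isChain_cons_cons.1 h).1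
  have hTsub : ∀ z ∈ (c :: T'), z ∈ (x :: Q') := by
    intro z hz
    have hz2 : z ∈ (x :: Q').reverse := by
      rw [hQrev]; exact List.mem_cons_of_mem _ hz
    exact List.mem_reverse.1 hz2
  -- the closed loop R
  set R : List Site := (x :: P') ++ (c :: T') with hRdef
  have hRne : R ≠ [] := by simp [hRdef]
  have hPlast : (x :: P').getLast hPne = y := by
    have h := List.getLast?_eq_getLast hPne
    rw [hPl] at h
    exact (Option.some.inj h).symm
  have hclast? : (c :: T').getLast? = some x := by
    have h := List.getLast?_reverse (l := x :: Q')
    rw [hQrev] at h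
    rw [← List.getLast?_cons_cons (a := y), h]
    rfl
  have hRchain : List.Chain' adjStar R := by
    refine List.isChain_append.2 ⟨hPc, hTchain, ?_⟩
    intro a ha b hb
    rw [hPl] at ha
    have ha' : a = y := by simpa [eq_comm] using ha
    have hb' : b = c := by simpa [eq_comm] using hb
    rw [ha', hb']
    exact hyc
  have hRlast? : R.getLast? = some x := by
    rw [hRdef, List.getLast?_append, hclast?]
    rfl
  have hRhead? : R.head? = some x := by simp [hRdef]
  have havR : ∀ z ∈ R, z ∉ square n := by
    intro z hz
    rcases List.mem_append.1 hz with h | h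
    · exact hPavoid z h
    · exact hQavoid z (hTsub z h)
  have hmemPQ : ∀ z ∈ R, z ∈ (x :: P') ∨ z ∈ (x :: Q') := by
    intro z hz
    rcases List.mem_append.1 hz with h | h
    · exact Or.inl h
    · exact Or.inr (hTsub z h)
  -- the splitting of Ssum at 0
  have h0K1 : |(0 : ℂ).re| ≤ (n : ℝ) := by simp
  have h0K2 : |(0 : ℂ).im| ≤ (n : ℝ) := by simp
  have hQswap : ∀ p ∈ prs (x :: Q'), pairArg 0 (p.2, p.1) = - pairArg 0 p := by
    intro p hp
    obtain ⟨h1, h2⟩ := mem_of_prs hp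
    obtain ⟨p1, p2⟩ := p
    exact pairArg_swap n (hQavoid _ h1) (hQavoid _ h2) (chain'_prs hQc _ hp) h0K1 h0K2
  have hQrevSsum : Ssum (x :: Q').reverse 0 = - Ssum (x :: Q') 0 :=
    Ssum_reverse _ 0 hQswap
  have hsplit : Ssum R 0 = Ssum (x :: P') 0 - Ssum (x :: Q') 0 := by
    rw [hRdef, Ssum_append (x :: P') hPne (c :: T') hTne 0, hPlast]
    have h2 : Ssum (x :: Q').reverse 0 = pairArg 0 (y, c) + Ssum (c :: T') 0 := by
      rw [hQrev]
      exact Ssum_cons₂ y c T' 0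
    have h3 : (c :: T').head hTne = c := rfl
    rw [h3]
    rw [h2] at hQrevSsum
    linarith
  have hSP : Ssum (x :: P') 0 < 0 := by
    rw [winding_eq_Ssum] at hPw
    by_contra hcon
    push_neg at hcon
    have := mul_nonneg hpos.le hcon
    linarith
  have hSQ : 0 < Ssum (x :: Q') 0 := by
    rw [winding_eq_Ssum] at hQw
    by_contra hcon
    push_neg at hcon
    have : 1 / (2 * Real.pi) * Ssum (x :: Q') 0 ≤ 0 :=
      mul_nonpos_of_nonneg_of_nonpos hpos.le hcon
    linarith
  have hneg : Ssum R 0 < 0 := by rw [hsplit]; linarith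
  -- constancy of Ssum over the square
  have hRheadv : R.head hRne = x := by
    have h := List.head?_eq_head hRne
    rw [hRhead?] at h
    exact (Option.some.inj h).symm
  have hRlastv : R.getLast hRne = x := by
    have h := List.getLast?_eq_getLast hRne
    rw [hRlast?] at h
    exact (Option.some.inj h).symm
  have hloop : R.getLast hRne = R.head hRne := by rw [hRheadv, hRlastv]
  have hconst : ∀ w0 ∈ square n, Ssum R (toC w0) = Ssum R 0 := fun w0 hw0 =>
    Ssum_const n R hRne hloop havR hRchain w0 hw0
  -- the circuit
  set C : List Site := R.dropLast with hCdef
  have hCR : C ++ [x] = R := by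
    refine List.dropLast_append_getLast? x ?_
    rw [hRlast?]
    rfl
  have hCne : C ≠ [] := by
    intro hc
    have h2 : R = [x] := by rw [← hCR, hc, List.nil_append]
    have h3 := congrArg List.length h2
    rw [hRdef] at h3
    simp [List.length_append] at h3
  obtain ⟨d, C', hC⟩ := List.exists_cons_of_ne_nil hCne
  obtain rfl : x = d := by
    have h := hRhead?
    rw [← hCR, hC] at h
    simpa using h.symm
  have hCchain : List.Chain' adjStar C := hRchain.prefix ⟨[x], hCR⟩
  have hClast_adj : adjStar (C.getLast hCne) x := by
    have h := hRchain
    rw [← hCR] at h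
    obtain ⟨-, -, hj⟩ := List.isChain_append.1 h
    refine hj _ ?_ x rfl
    rw [Option.mem_def, List.getLast?_eq_getLast hCne]
  have hCheadv : C.head hCne = x := by
    have h := List.head?_eq_head hCne
    have h2 : C.head? = some x := by rw [hC]; rfl
    rw [h2] at h
    exact (Option.some.inj h).symm
  have hCstar : IsStarCircuit C := by
    refine ⟨hCchain, hCne, ?_⟩
    rw [hCheadv]
    exact hClast_adj
  have htake : C.take 1 = [x] := by rw [hC]; rfl
  have hCCx : C ++ C.take 1 = R := by rw [htake, hCR]
  refine ⟨C, hCstar, ?_, ?_⟩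
  · intro z hz
    constructor
    · intro hzC
      exact havR z (by rw [← hCR]; exact List.mem_append_left _ hzC) hz
    · rw [hCCx, windingAround_eq_Ssum, hconst z hz]
      have hlt : (1 / (2 * Real.pi)) * Ssum R 0 < 0 := mul_neg_of_pos_of_neg hpos hneg
      exact ne_of_lt hlt
  · intro z hzC
    exact hmemPQ z (by rw [← hCR]; exact List.mem_append_left _ hzC)

end Percolation
end

section
/- Let Δ ⊂ ℤ² be a finite set containing the origin, let x be a site on the left side of Δ and y a site on the right side of Δ. Then every *path from x to y avoiding Δ has nonzero winding number around the origin; consequently, for every configuration σ, there exists a 1*path from x to y avoiding Δ if and only if there exists a clockwise 1*path from x to y in Δᶜ or a counterclockwise 1*path from x to y in Δᶜ. -/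
open MeasureTheory ProbabilityTheory
open scoped ENNReal

namespace Percolation

lemma toC_ne_s13 {z : Site} (h : z ≠ ((0:ℤ), (0:ℤ))) : toC z ≠ 0 := by
  intro h0
  apply h
  simp only [toC, Complex.ext_iff, Complex.add_re, Complex.add_im, Complex.mul_re,
    Complex.mul_im, Complex.I_re, Complex.I_im, Complex.intCast_re, Complex.intCast_im,
    Complex.zero_re, Complex.zero_im] at h0
  obtain ⟨h1, h2⟩ := h0
  have e1 : (z.1 : ℝ) = 0 := by linarith
  have e2 : (z.2 : ℝ) = 0 := by linarith
  have f1 : z.1 = 0 := by exact_mod_cast e1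
  have f2 : z.2 = 0 := by exact_mod_cast e2
  ext <;> simpa [f1, f2]

lemma exp_arg_telescope (P : List Site) :
    (∀ z ∈ P, toC z ≠ 0) → ∀ x y : Site,
      P.head? = some x → P.getLast? = some y →
      Complex.exp ((((P.zip P.tail).map fun p =>
          Complex.arg (toC p.2 / toC p.1)).sum : ℝ) * Complex.I) =
        (toC y / ‖toC y‖) / (toC x / ‖toC x‖) := by
  induction P with
  | nil => intro _ x y hh _; simp at hh
  | cons a t ih =>
    intro h x y hh hl
    cases t with
    | nil =>
      simp only [List.head?_cons, Option.some.injEq] at hh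
      simp only [List.getLast?_singleton, Option.some.injEq] at hl
      subst hh; subst hl
      have ha : toC a ≠ 0 := h a (by simp)
      have habs : (‖toC a‖ : ℂ) ≠ 0 := by exact_mod_cast norm_ne_zero_iff.mpr ha
      simp [div_self (div_ne_zero ha habs)]
    | cons b t2 =>
      have ha : toC a ≠ 0 := h a (by simp)
      have hb : toC b ≠ 0 := h b (by simp)
      have hax : a = x := by simpa using hh
      subst hax
      have hy : toC y ≠ 0 := by
        have : y ∈ b :: t2 := List.mem_of_mem_getLast? (by simpa using hl)
        exact h y (List.mem_cons_of_mem _ this)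
      have hrec := ih (fun z hz => h z (List.mem_cons_of_mem _ hz)) b y rfl
        (by simpa using hl)
      have hzip : (a :: b :: t2).zip (a :: b :: t2).tail
          = (a, b) :: (b :: t2).zip (b :: t2).tail := by simp
      rw [hzip]
      simp only [List.map_cons, List.sum_cons]
      push_cast
      rw [add_mul, Complex.exp_add, hrec]
      have hw : toC b / toC a ≠ 0 := div_ne_zero hb ha
      have hexp : Complex.exp (↑(Complex.arg (toC b / toC a)) * Complex.I)
          = (toC b / toC a) / ‖toC b / toC a‖ := by
        rw [eq_div_iff (by exact_mod_cast (norm_ne_zero_iff.mpr hw))]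
        rw [mul_comm]
        exact Complex.norm_mul_exp_arg_mul_I _
      rw [hexp, norm_div]
      have haa : (‖toC a‖ : ℂ) ≠ 0 := by exact_mod_cast norm_ne_zero_iff.mpr ha
      have hba : (‖toC b‖ : ℂ) ≠ 0 := by exact_mod_cast norm_ne_zero_iff.mpr hb
      have hya : (‖toC y‖ : ℂ) ≠ 0 := by exact_mod_cast norm_ne_zero_iff.mpr hy
      push_cast
      field_simp

/-- Every `*`path from a site on the left side of `Δ` to a site on the right side of `Δ`
avoiding `Δ` (which contains the origin) has nonzero winding number; consequently a
`1*`path from `x` to `y` off `Δ` exists iff a clockwise or a counterclockwise one does. -/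
theorem statement13 (Δ : Finset Site) (hΔ : ((0 : ℤ), (0 : ℤ)) ∈ Δ) (x y : Site)
    (hx : OnLeftSide x ↑Δ) (hy : OnRightSide y ↑Δ) :
    (∀ P : List Site, P ≠ [] → P.Chain' adjStar → P.head? = some x →
      P.getLast? = some y → (∀ z ∈ P, z ∉ Δ) → winding P ≠ 0) ∧
    (∀ σ : Config,
      (∃ P : List Site, starPathBetweenAvoiding σ ↑Δ x y P) ↔
        ((∃ P : List Site, starPathBetweenAvoiding σ ↑Δ x y P ∧ winding P < 0) ∨
         (∃ P : List Site, starPathBetweenAvoiding σ ↑Δ x y P ∧ 0 < winding P))) := by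
  have key : ∀ P : List Site, P ≠ [] → P.Chain' adjStar → P.head? = some x →
      P.getLast? = some y → (∀ z ∈ P, z ∉ Δ) → winding P ≠ 0 := by
    intro P hne _ hh hl havoid hw
    obtain ⟨d, hd, _, hxle⟩ := hx
    obtain ⟨e, he, _, hyge⟩ := hy
    have hx1 : x.1 < 0 := by omega
    have hy1 : 0 < y.1 := by omega
    have hzne : ∀ z ∈ P, toC z ≠ 0 := by
      intro z hz
      exact toC_ne_s13 (fun hz0 => havoid z hz (hz0 ▸ hΔ))
    have hS : ((P.zip P.tail).map fun p => Complex.arg (toC p.2 / toC p.1)).sum = 0 := by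
      unfold winding at hw
      have hpi : (2 : ℝ) * Real.pi ≠ 0 := by positivity
      rcases mul_eq_zero.mp hw with h | h
      · exact absurd h (by positivity)
      · exact h
    have htel := exp_arg_telescope P hzne x y hh hl
    rw [hS] at htel
    simp only [Complex.ofReal_zero, zero_mul, Complex.exp_zero] at htel
    have hxne : toC x ≠ 0 := hzne x (List.mem_of_mem_head? hh)
    have hyne : toC y ≠ 0 := hzne y (List.mem_of_mem_getLast? hl)
    have hxa : (0:ℝ) < ‖toC x‖ := norm_pos_iff.mpr hxne
    have hya : (0:ℝ) < ‖toC y‖ := norm_pos_iff.mpr hyne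
    have hxa' : (‖toC x‖ : ℂ) ≠ 0 := by exact_mod_cast hxa.ne'
    have hya' : (‖toC y‖ : ℂ) ≠ 0 := by exact_mod_cast hya.ne'
    have heq : toC y * (‖toC x‖ : ℂ) = toC x * (‖toC y‖ : ℂ) := by
      field_simp at htel
      linear_combination -htel
    have hre := congrArg Complex.re heq
    have hte : ∀ z : Site, (toC z).re = (z.1 : ℝ) := by
      intro z; simp [toC]
    simp only [Complex.mul_re, Complex.ofReal_re, Complex.ofReal_im, mul_zero,
      sub_zero, hte] at hre
    have hx1' : (x.1 : ℝ) < 0 := by exact_mod_cast hx1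
    have hy1' : (0:ℝ) < (y.1 : ℝ) := by exact_mod_cast hy1
    have h1 := mul_pos hy1' hxa
    have h2 := mul_neg_of_neg_of_pos hx1' hya
    linarith
  refine ⟨key, fun σ => ⟨?_, ?_⟩⟩
  · rintro ⟨P, hP⟩
    obtain ⟨⟨hne, hchain, hall⟩, hh, hl, havoid⟩ := hP
    rcases (key P hne hchain hh hl havoid).lt_or_gt with h | h
    · exact Or.inl ⟨P, ⟨⟨hne, hchain, hall⟩, hh, hl, havoid⟩, h⟩
    · exact Or.inr ⟨P, ⟨⟨hne, hchain, hall⟩, hh, hl, havoid⟩, h⟩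
  · rintro (⟨P, hP, _⟩ | ⟨P, hP, _⟩) <;> exact ⟨P, hP⟩


end Percolation
end
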